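/- Let X and Y be measurable spaces, D a probability measure on X × Y, and f : X × Y → ℝ a measurable function with f(x,y) > 0 for all (x,y). Define φ(x,y) = -log f(x,y) and, for T ∈ ℝ, the confidence set C_T(x) = {y ∈ Y : f(x,y) ≥ exp(-T)}. Assume the pushforward measure of D under φ has no atoms. Fix ε ∈ [0,1], n ∈ ℕ with n ≥ 1, and k ∈ ℕ with k < n. For a sample z = (z₁,…,z_n) ∈ (X×Y)ⁿ let T̂(z) be the (k+1)-st largest value among φ(z₁),…,φ(z_n) (equivalently, the smallest T such that at most k indices i satisfy φ(z_i) > T). Then the n-fold product measure D^⊗n of the set { z : D({(x,y) : y ∉ C_{T̂(z)}(x)}) > ε } is at most Σ_{i=0}^{k} (n choose i) ε^i (1-ε)^{n-i}. -/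

import Mathlib

open MeasureTheory Set
open scoped ENNReal

/-- The `(k+1)`-st largest coordinate of `t : Fin n → ℝ`, i.e. the `(k+1)`-st entry of `t`
sorted in nonincreasing order. -/
noncomputable def kthLargest {n : ℕ} (k : ℕ) (t : Fin n → ℝ) : ℝ :=
  (Multiset.sort (↑(List.ofFn t) : Multiset ℝ) (· ≤ ·)).getD (n - 1 - k) 0

lemma countP_sort_eq {n : ℕ} (t : Fin n → ℝ) (s : ℝ) :
    ((Multiset.sort (↑(List.ofFn t) : Multiset ℝ) (· ≤ ·)).countP (fun x => decide (s ≤ x)))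
      = (Finset.univ.filter fun i => s ≤ t i).card := by
  have h1 : ((Multiset.sort (↑(List.ofFn t) : Multiset ℝ) (· ≤ ·)) : Multiset ℝ)
      = (↑(List.ofFn t) : Multiset ℝ) := Multiset.sort_eq _ _
  have h2 := congrArg (Multiset.countP (fun x => s ≤ x)) h1
  rw [Multiset.coe_countP, Multiset.coe_countP] at h2
  rw [h2, List.ofFn_eq_map, List.countP_map]
  have h3 : (Finset.univ.filter fun i => s ≤ t i).card
      = Multiset.countP (fun i => s ≤ t i) (Finset.univ : Finset (Fin n)).val := by
    rw [Finset.card_def, Finset.filter_val, Multiset.countP_eq_card_filter]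
  rw [h3, Fin.univ_def]
  have h4 : ((⟨List.finRange n, List.nodup_finRange n⟩ : Finset (Fin n)).val)
      = (↑(List.finRange n) : Multiset (Fin n)) := rfl
  rw [h4, Multiset.coe_countP]
  rfl

lemma exists_quantile (μ : Measure ℝ) [IsProbabilityMeasure μ]
    (hatom : ∀ t : ℝ, μ {t} = 0) {e : ℝ≥0∞} (he0 : 0 < e) (he1 : e < 1) :
    ∃ s : ℝ, μ (Ici s) = e ∧ μ (Ioi s) = e := by
  have hF : ∀ a b : ℝ, a ≤ b → μ (Ioi b) ≤ μ (Ioi a) :=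
    fun a b hab => measure_mono (Ioi_subset_Ioi hab)
  set S : Set ℝ := {s : ℝ | μ (Ioi s) ≤ e} with hS
  -- S nonempty
  have htend0 : Filter.Tendsto (fun m : ℕ => μ (Ioi (m : ℝ))) Filter.atTop (nhds 0) := by
    have hi : (⋂ m : ℕ, Ioi (m : ℝ)) = ∅ := by
      ext x; simp only [mem_iInter, mem_Ioi, mem_empty_iff_false, iff_false, not_forall, not_lt]
      exact exists_nat_ge x
    have := tendsto_measure_iInter_atTop (μ := μ)
      (fun m : ℕ => measurableSet_Ioi.nullMeasurableSet)
      (fun a b hab => Ioi_subset_Ioi (Nat.cast_le.mpr hab))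
      ⟨0, measure_ne_top _ _⟩
    rw [hi] at this; simpa [Function.comp_def] using this
  have hne : S.Nonempty := by
    have := htend0.eventually_lt_const he0
    rcases this.exists with ⟨m, hm⟩
    exact ⟨(m : ℝ), le_of_lt hm⟩
  -- bounded below
  have htend1 : Filter.Tendsto (fun m : ℕ => μ (Ioi (-(m : ℝ)))) Filter.atTop (nhds 1) := by
    have hu : (⋃ m : ℕ, Ioi (-(m : ℝ))) = univ := by
      ext x; simp only [mem_iUnion, mem_Ioi, mem_univ, iff_true]
      rcases exists_nat_gt (-x) with ⟨m, hm⟩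
      exact ⟨m, by linarith⟩
    have := tendsto_measure_iUnion_atTop (μ := μ)
      (fun a b hab => Ioi_subset_Ioi (neg_le_neg (Nat.cast_le.mpr hab)))
    rw [hu] at this; simpa [Function.comp_def] using this
  have hbdd : BddBelow S := by
    have := htend1.eventually_const_lt he1
    rcases this.exists with ⟨m, hm⟩
    refine ⟨-(m : ℝ), fun s hs => ?_⟩
    by_contra hcon
    push_neg at hcon
    exact absurd (le_trans (hF s _ hcon.le) hs) (not_le.mpr hm)
  set q : ℝ := sInf S with hq
  have hqmem : ∀ s > q, μ (Ioi s) ≤ e := by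
    intro s hs
    rcases (csInf_lt_iff hbdd hne).mp hs with ⟨s', hs', hlt⟩
    exact le_trans (hF s' s hlt.le) hs'
  have hqlt : ∀ s < q, e < μ (Ioi s) := by
    intro s hs
    by_contra hcon
    push_neg at hcon
    exact absurd (csInf_le hbdd hcon) (not_le.mpr hs)
  -- μ (Ioi q) ≤ e
  have hIoi : μ (Ioi q) ≤ e := by
    have hu : (⋃ m : ℕ, Ioi (q + 1 / (m + 1))) = Ioi q := by
      ext x
      simp only [mem_iUnion, mem_Ioi]
      constructor
      · rintro ⟨m, hm⟩
        have : (0:ℝ) < 1 / (m + 1) := by positivity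
        linarith
      · intro hx
        rcases exists_nat_one_div_lt (show (0:ℝ) < x - q by linarith) with ⟨m, hm⟩
        exact ⟨m, by push_cast at hm ⊢; linarith⟩
    have hmono : Monotone fun m : ℕ => Ioi (q + 1 / ((m:ℝ) + 1)) := by
      intro a b hab
      apply Ioi_subset_Ioi
      have : (1:ℝ) / (b + 1) ≤ 1 / (a + 1) := by
        apply one_div_le_one_div_of_le (by positivity)
        exact_mod_cast by omega
      linarith
    have ht := tendsto_measure_iUnion_atTop (μ := μ) hmono
    rw [hu] at ht
    refine le_of_tendsto ht (Filter.Eventually.of_forall fun m => ?_)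
    exact hqmem _ (lt_add_of_pos_right q (by positivity))
  -- e ≤ μ (Ici q)
  have hIci : e ≤ μ (Ici q) := by
    have hi : (⋂ m : ℕ, Ioi (q - 1 / (m + 1))) = Ici q := by
      ext x
      simp only [mem_iInter, mem_Ioi, mem_Ici]
      constructor
      · intro hall
        by_contra hcon
        push_neg at hcon
        rcases exists_nat_one_div_lt (show (0:ℝ) < q - x by linarith) with ⟨m, hm⟩
        have := hall m
        push_cast at hm
        linarith
      · intro hx m
        have : (0:ℝ) < 1 / ((m:ℝ) + 1) := by positivity
        linarith
    have hanti : Antitone fun m : ℕ => Ioi (q - 1 / ((m:ℝ) + 1)) := by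
      intro a b hab
      apply Ioi_subset_Ioi
      have : (1:ℝ) / ((b:ℝ) + 1) ≤ 1 / ((a:ℝ) + 1) := by
        apply one_div_le_one_div_of_le (by positivity)
        exact_mod_cast by omega
      linarith
    have ht := tendsto_measure_iInter_atTop (μ := μ)
      (fun m => measurableSet_Ioi.nullMeasurableSet) hanti ⟨0, measure_ne_top _ _⟩
    rw [hi] at ht
    refine ge_of_tendsto ht (Filter.Eventually.of_forall fun m => ?_)
    exact (hqlt _ (sub_lt_self q (by positivity))).le
  have hcompare : μ (Ici q) ≤ μ (Ioi q) := by
    calc μ (Ici q) = μ (insert q (Ioi q)) := by rw [Ioi_insert]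
      _ ≤ μ {q} + μ (Ioi q) := by rw [insert_eq]; exact measure_union_le _ _
      _ = μ (Ioi q) := by rw [hatom q, zero_add]
  have h1 : μ (Ioi q) = e := le_antisymm hIoi (le_trans hIci hcompare)
  exact ⟨q, le_antisymm (hcompare.trans (le_of_eq h1)) hIci, h1⟩

lemma le_kthLargest {n k : ℕ} (hk : k < n) (t : Fin n → ℝ) (s : ℝ)
    (h : k + 1 ≤ (Finset.univ.filter fun i => s ≤ t i).card) :
    s ≤ kthLargest k t := by
  classical
  set l := Multiset.sort (↑(List.ofFn t) : Multiset ℝ) (· ≤ ·) with hl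
  have hlen : l.length = n := by
    rw [hl, Multiset.length_sort, Multiset.coe_card, List.length_ofFn]
  have hsort : l.Pairwise (· ≤ ·) := Multiset.pairwise_sort _ _
  have hcount : k + 1 ≤ l.countP (fun x => decide (s ≤ x)) := by
    rw [countP_sort_eq t s]; exact h
  by_contra hcon
  push_neg at hcon
  have hj : n - 1 - k < n := by omega
  have hjl : n - 1 - k < l.length := by omega
  have hget : l.getD (n - 1 - k) 0 = l.get ⟨n - 1 - k, hjl⟩ := by
    rw [List.getD_eq_getElem l 0 hjl]; rfl
  have htake : ∀ x ∈ l.take (n - k), ¬ (s ≤ x) := by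
    intro x hx
    rw [List.mem_take_iff_getElem] at hx
    obtain ⟨i, hi, hix⟩ := hx
    have hile : i ≤ n - 1 - k := by omega
    have hrel : l.get ⟨i, by omega⟩ ≤ l.get ⟨n - 1 - k, hjl⟩ :=
      hsort.rel_get_of_le (by simpa using hile)
    have hxle : x ≤ l.get ⟨n - 1 - k, hjl⟩ := by
      rw [← hix]; exact hrel
    intro hs
    have : s ≤ kthLargest k t := le_trans hs (by rw [kthLargest, ← hl, hget] at *; exact hxle)
    exact absurd this (not_le.mpr hcon)
  have hsplit : l.countP (fun x => decide (s ≤ x))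
      = (l.take (n-k)).countP (fun x => decide (s ≤ x))
        + (l.drop (n-k)).countP (fun x => decide (s ≤ x)) := by
    conv_lhs => rw [← List.take_append_drop (n-k) l]
    rw [List.countP_append]
  have h0 : (l.take (n-k)).countP (fun x => decide (s ≤ x)) = 0 := by
    rw [List.countP_eq_zero]
    intro x hx
    simpa using htake x hx
  have hd : (l.drop (n-k)).countP (fun x => decide (s ≤ x)) ≤ k := by
    calc (l.drop (n-k)).countP (fun x => decide (s ≤ x)) ≤ (l.drop (n-k)).length :=
          List.countP_le_length
      _ = l.length - (n-k) := List.length_drop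
      _ ≤ k := by omega
  omega

/-- **Theorem 1 (PAC confidence sets).** If the pushforward of `D` under
`φ (x,y) = -log f (x,y)` has no atoms, then the probability (over an i.i.d. validation sample
`z` of size `n`) that the confidence set predictor `C_{T̂(z)}` has true error greater than `ε`
is at most the binomial tail `∑_{i=0}^k (n choose i) ε^i (1-ε)^(n-i)`, where `T̂(z)` is the
`(k+1)`-st largest value among `φ(z₁), …, φ(z_n)`. -/
theorem pac_confidence_sets
    {X Y : Type*} [MeasurableSpace X] [MeasurableSpace Y]
    (D : Measure (X × Y)) [IsProbabilityMeasure D]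
    (f : X × Y → ℝ) (hf : Measurable f) (hfpos : ∀ p, 0 < f p)
    (φ : X × Y → ℝ) (hφ : ∀ p, φ p = -Real.log (f p))
    (C : ℝ → X → Set Y) (hC : ∀ T x, C T x = {y : Y | Real.exp (-T) ≤ f (x, y)})
    (hatom : ∀ t : ℝ, D.map φ {t} = 0)
    (ε : ℝ) (hε : ε ∈ Set.Icc (0 : ℝ) 1)
    (n k : ℕ) (hn : 1 ≤ n) (hk : k < n) :
    (Measure.pi fun _ : Fin n => D)
      {z : Fin n → X × Y |
        ENNReal.ofReal ε <
          D {p : X × Y | p.2 ∉ C (kthLargest k fun i => φ (z i)) p.1}}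
      ≤ ENNReal.ofReal (∑ i ∈ Finset.range (k + 1),
          (n.choose i : ℝ) * ε ^ i * (1 - ε) ^ (n - i)) := by
  obtain ⟨hε0, hε1⟩ := hε
  have hφmeas : Measurable φ := by
    have hfun : φ = fun p => -Real.log (f p) := funext hφ
    rw [hfun]
    exact (Real.measurable_log.comp hf).neg
  have herr : ∀ T : ℝ, {p : X × Y | p.2 ∉ C T p.1} = φ ⁻¹' (Ioi T) := by
    intro T
    ext p
    have hp : ((p.1, p.2) : X × Y) = p := rfl
    simp only [mem_setOf_eq, hC, mem_preimage, mem_Ioi, hp, not_le, hφ]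
    exact (Real.log_lt_iff_lt_exp (hfpos p)).symm.trans lt_neg
  set μ : Measure ℝ := D.map φ with hμ
  haveI : IsProbabilityMeasure μ := Measure.isProbabilityMeasure_map hφmeas.aemeasurable
  have hμIoi : ∀ T, D {p : X × Y | p.2 ∉ C T p.1} = μ (Ioi T) := by
    intro T
    rw [herr T, hμ, Measure.map_apply hφmeas measurableSet_Ioi]
  rcases eq_or_lt_of_le hε0 with h0 | h0
  · -- ε = 0
    have hsum : (∑ i ∈ Finset.range (k + 1), (n.choose i : ℝ) * ε ^ i * (1 - ε) ^ (n - i)) = 1 := by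
      rw [← h0]
      have hterm : ∀ i ∈ Finset.range (k+1),
          (n.choose i : ℝ) * (0:ℝ) ^ i * (1 - 0) ^ (n - i) = if i = 0 then 1 else 0 := by
        intro i _
        rcases Nat.eq_zero_or_pos i with rfl | hi
        · simp
        · rw [if_neg (Nat.pos_iff_ne_zero.mp hi), zero_pow (Nat.pos_iff_ne_zero.mp hi)]
          ring
      rw [Finset.sum_congr rfl hterm, Finset.sum_ite_eq' (Finset.range (k+1)) 0 (fun _ => (1:ℝ))]
      simp
    rw [hsum, ENNReal.ofReal_one]
    exact prob_le_one
  rcases eq_or_lt_of_le hε1 with h1 | h1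
  · -- ε = 1
    have hempty : {z : Fin n → X × Y |
        ENNReal.ofReal ε <
          D {p : X × Y | p.2 ∉ C (kthLargest k fun i => φ (z i)) p.1}} = ∅ := by
      ext z
      simp only [mem_setOf_eq, mem_empty_iff_false, iff_false, not_lt, h1,
        ENNReal.ofReal_one]
      exact prob_le_one
    rw [hempty, measure_empty]
    exact zero_le
  · -- 0 < ε < 1
    classical
    obtain ⟨q, hqIci, hqIoi⟩ := exists_quantile μ (fun t => hatom t)
      (ENNReal.ofReal_pos.mpr h0) (ENNReal.ofReal_lt_one.mpr h1)
    set A : Set (X × Y) := φ ⁻¹' (Ici q) with hAdef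
    have hA : MeasurableSet A := hφmeas measurableSet_Ici
    have hDA : D A = ENNReal.ofReal ε := by
      rw [hAdef, ← Measure.map_apply hφmeas measurableSet_Ici, ← hμ, hqIci]
    have hDAc : D Aᶜ = ENNReal.ofReal (1 - ε) := by
      rw [measure_compl hA (measure_ne_top _ _), measure_univ, hDA,
        ENNReal.ofReal_sub 1 hε0, ENNReal.ofReal_one]
    set 𝒮 : Finset (Finset (Fin n)) := Finset.univ.powerset.filter (fun S => S.card ≤ k) with h𝒮
    have hincl : {z : Fin n → X × Y |
        ENNReal.ofReal ε <
          D {p : X × Y | p.2 ∉ C (kthLargest k fun i => φ (z i)) p.1}}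
        ⊆ ⋃ S ∈ 𝒮, Set.pi univ (fun i => if i ∈ S then A else Aᶜ) := by
      intro z hz
      simp only [mem_setOf_eq] at hz
      rw [hμIoi] at hz
      have hTq : (kthLargest k fun i => φ (z i)) < q := by
        by_contra hcon
        push_neg at hcon
        have hle : μ (Ioi (kthLargest k fun i => φ (z i))) ≤ μ (Ioi q) :=
          measure_mono (Ioi_subset_Ioi hcon)
        rw [hqIoi] at hle
        exact absurd (lt_of_lt_of_le hz hle) (lt_irrefl _)
      set S : Finset (Fin n) := Finset.univ.filter (fun i => q ≤ φ (z i)) with hSdef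
      have hcard : S.card ≤ k := by
        by_contra hcon
        push_neg at hcon
        have hq' : q ≤ kthLargest k fun i => φ (z i) :=
          le_kthLargest hk (fun i => φ (z i)) q hcon
        linarith
      refine Set.mem_biUnion (Finset.mem_filter.mpr
        ⟨Finset.mem_powerset.mpr (Finset.subset_univ S), hcard⟩) ?_
      intro i _
      show z i ∈ (if i ∈ S then A else Aᶜ)
      by_cases hi : i ∈ S
      · rw [if_pos hi]
        exact (Finset.mem_filter.mp hi).2
      · rw [if_neg hi]
        intro hmem
        exact hi (Finset.mem_filter.mpr ⟨Finset.mem_univ i, hmem⟩)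
    have hpiS : ∀ S : Finset (Fin n),
        (Measure.pi fun _ : Fin n => D) (Set.pi univ (fun i => if i ∈ S then A else Aᶜ))
        = (ENNReal.ofReal ε) ^ S.card * (ENNReal.ofReal (1 - ε)) ^ (n - S.card) := by
      intro S
      rw [Measure.pi_pi]
      have hDite : ∀ i, D (if i ∈ S then A else Aᶜ)
          = if i ∈ S then ENNReal.ofReal ε else ENNReal.ofReal (1 - ε) := by
        intro i; by_cases hi : i ∈ S <;> simp [hi, hDA, hDAc]
      rw [Finset.prod_congr rfl (fun i _ => hDite i), Finset.prod_ite,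
        Finset.prod_const, Finset.prod_const,
        Finset.filter_mem_eq_inter, Finset.univ_inter, Finset.filter_not,
        Finset.filter_mem_eq_inter, Finset.univ_inter]
      congr 1
      rw [Finset.card_sdiff_of_subset (Finset.subset_univ S), Finset.card_univ, Fintype.card_fin]
    refine le_trans (measure_mono hincl) ?_
    refine le_trans (measure_biUnion_finset_le _ _) ?_
    have hstep1 : ∑ S ∈ 𝒮, (Measure.pi fun _ : Fin n => D)
          (Set.pi univ (fun i => if i ∈ S then A else Aᶜ))
        = ∑ S ∈ 𝒮, (ENNReal.ofReal ε) ^ S.card * (ENNReal.ofReal (1 - ε)) ^ (n - S.card) :=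
      Finset.sum_congr rfl (fun S _ => hpiS S)
    have hstep2 : ∑ S ∈ 𝒮, (ENNReal.ofReal ε) ^ S.card * (ENNReal.ofReal (1 - ε)) ^ (n - S.card)
        = ∑ i ∈ Finset.range (k+1), (n.choose i : ℝ≥0∞)
            * (ENNReal.ofReal ε) ^ i * (ENNReal.ofReal (1 - ε)) ^ (n - i) := by
      have h𝒮eq : 𝒮 = (Finset.range (k+1)).biUnion
          (fun i => Finset.powersetCard i Finset.univ) := by
        ext S
        simp only [h𝒮, Finset.mem_filter, Finset.mem_powerset, Finset.mem_biUnion,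
          Finset.mem_range, Finset.mem_powersetCard, Nat.lt_succ_iff]
        constructor
        · rintro ⟨hsub, hcard⟩
          exact ⟨S.card, hcard, hsub, rfl⟩
        · rintro ⟨i, hi, hsub, rfl⟩
          exact ⟨hsub, hi⟩
      rw [h𝒮eq, Finset.sum_biUnion (fun i _ j _ hij =>
        Finset.pairwise_disjoint_powersetCard Finset.univ hij)]
      apply Finset.sum_congr rfl
      intro i _
      have hin : ∀ S ∈ Finset.powersetCard i (Finset.univ : Finset (Fin n)),
          (ENNReal.ofReal ε) ^ S.card * (ENNReal.ofReal (1 - ε)) ^ (n - S.card)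
          = (ENNReal.ofReal ε) ^ i * (ENNReal.ofReal (1 - ε)) ^ (n - i) := by
        intro S hS
        rw [(Finset.mem_powersetCard.mp hS).2]
      rw [Finset.sum_congr rfl hin, Finset.sum_const, Finset.card_powersetCard,
        Finset.card_univ, Fintype.card_fin, nsmul_eq_mul, mul_assoc]
    have hstep3 : ENNReal.ofReal (∑ i ∈ Finset.range (k + 1),
          (n.choose i : ℝ) * ε ^ i * (1 - ε) ^ (n - i))
        = ∑ i ∈ Finset.range (k+1), (n.choose i : ℝ≥0∞)
            * (ENNReal.ofReal ε) ^ i * (ENNReal.ofReal (1 - ε)) ^ (n - i) := by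
      rw [ENNReal.ofReal_sum_of_nonneg]
      · apply Finset.sum_congr rfl
        intro i _
        rw [ENNReal.ofReal_mul (by positivity), ENNReal.ofReal_mul (Nat.cast_nonneg _),
          ENNReal.ofReal_pow hε0, ENNReal.ofReal_pow (by linarith),
          ENNReal.ofReal_natCast]
      · intro i _
        exact mul_nonneg (mul_nonneg (Nat.cast_nonneg _) (pow_nonneg hε0 _))
          (pow_nonneg (by linarith) _)
    rw [hstep1, hstep2, hstep3]
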